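/- Let A be a compact positive self-adjoint operator on a Hilbert space, β > 0, 1 ≤ l ≤ T integers, and η_l, ..., η_T positive reals with η_t‖A‖ < 1 for all l ≤ t ≤ T. Then ‖A^β ∏_{j=l}^{T}(I − η_j A)^2‖ ≤ 2((β/(2e))^β + ‖A‖^β) / (1 + (∑_{j=l}^{T} η_j)^β). -/

import Mathlib

open scoped RealInnerProductSpace

private lemma key1 {β S u : ℝ} (hβ : 0 < β) (hS : 0 < S) (hu : 0 ≤ u) :
    u ^ β * Real.exp (-(2 * S * u)) ≤ (β / (2 * Real.exp 1)) ^ β / S ^ β := by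
  have hc : (0:ℝ) < β / (2 * Real.exp 1 * S) := by positivity
  have hrw : (β / (2 * Real.exp 1)) ^ β / S ^ β = (β / (2 * Real.exp 1 * S)) ^ β := by
    rw [← Real.div_rpow (by positivity) hS.le]; ring_nf
  rw [hrw]
  rcases eq_or_lt_of_le hu with h | hu'
  · rw [← h, Real.zero_rpow hβ.ne', zero_mul]
    positivity
  · have h1 : Real.log (2 * S * u / β) ≤ 2 * S * u / β - 1 :=
      Real.log_le_sub_one_of_pos (by positivity)
    have e1 : Real.log (2 * S * u / β) = Real.log u - Real.log (β / (2 * S)) := by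
      rw [show 2 * S * u / β = u / (β / (2 * S)) by field_simp,
        Real.log_div (ne_of_gt hu') (by positivity)]
    have e2 : Real.log (β / (2 * Real.exp 1 * S)) = Real.log (β / (2 * S)) - 1 := by
      rw [show β / (2 * Real.exp 1 * S) = (β / (2 * S)) / Real.exp 1 by rw [div_div]; ring_nf,
        Real.log_div (by positivity) (Real.exp_ne_zero 1), Real.log_exp]
    rw [Real.rpow_def_of_pos hu', Real.rpow_def_of_pos hc, ← Real.exp_add, Real.exp_le_exp]
    have h2 : β * Real.log (2 * S * u / β) ≤ β * (2 * S * u / β - 1) :=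
      mul_le_mul_of_nonneg_left h1 hβ.le
    have h3 : β * (2 * S * u / β) = 2 * S * u := by field_simp
    rw [e1] at h2
    rw [e2]
    nlinarith

private lemma prodBounds {M : ℝ} :
    ∀ (L : List ℝ), (∀ a ∈ L, 0 < a ∧ a * M < 1) → ∀ u : ℝ, 0 ≤ u → u ≤ M →
      0 ≤ (L.map fun a => (1 - a * u) ^ 2).prod ∧
      (L.map fun a => (1 - a * u) ^ 2).prod ≤ 1 ∧
      (L.map fun a => (1 - a * u) ^ 2).prod ≤ Real.exp (-(2 * L.sum * u)) := by
  intro L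
  induction L with
  | nil => intro _ u _ _; simp
  | cons a L ih =>
    intro hL u hu0 huM
    obtain ⟨ha, haM⟩ := hL a List.mem_cons_self
    have ih' := ih (fun b hb => hL b (List.mem_cons_of_mem a hb)) u hu0 huM
    have hau : a * u < 1 := lt_of_le_of_lt (by nlinarith) haM
    have hau0 : 0 ≤ a * u := by positivity
    have hf0 : 0 ≤ (1 - a * u) ^ 2 := sq_nonneg _
    have hf1 : (1 - a * u) ^ 2 ≤ 1 := by nlinarith
    have hfe : (1 - a * u) ^ 2 ≤ Real.exp (-(2 * a * u)) := by
      have h1 : 1 - a * u ≤ Real.exp (-(a * u)) := by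
        have := Real.add_one_le_exp (-(a * u)); linarith
      have h2 : 0 ≤ 1 - a * u := by linarith
      calc (1 - a * u) ^ 2 ≤ Real.exp (-(a * u)) ^ 2 := by nlinarith [Real.exp_pos (-(a*u))]
        _ = Real.exp (-(2 * a * u)) := by
            rw [← Real.exp_nat_mul]; ring_nf
    simp only [List.map_cons, List.prod_cons, List.sum_cons]
    refine ⟨mul_nonneg hf0 ih'.1, by nlinarith [ih'.1, ih'.2.1], ?_⟩
    calc (1 - a * u) ^ 2 * (L.map fun a => (1 - a * u) ^ 2).prod
        ≤ Real.exp (-(2 * a * u)) * Real.exp (-(2 * L.sum * u)) := by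
          apply mul_le_mul hfe ih'.2.2 ih'.1 (Real.exp_pos _).le
      _ = Real.exp (-(2 * (a + L.sum) * u)) := by rw [← Real.exp_add]; ring_nf

private lemma contProd (L : List ℝ) :
    Continuous fun u : ℝ => (L.map fun a => (1 - a * u) ^ 2).prod := by
  induction L with
  | nil => simpa using continuous_const
  | cons a L ih =>
    simp only [List.map_cons, List.prod_cons]
    exact (((continuous_const.sub (continuous_const.mul continuous_id)).pow 2).mul ih)

private lemma prodCfc {H : Type*} [NormedAddCommGroup H] [InnerProductSpace ℂ H]
    [CompleteSpace H] (A : H →L[ℂ] H) (hsa : IsSelfAdjoint A) (L : List ℝ) :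
    (L.map (fun a : ℝ => (1 - (a : ℂ) • A) ^ 2)).prod
      = cfc (fun u : ℝ => (L.map fun a => (1 - a * u) ^ 2).prod) A := by
  induction L with
  | nil => simp only [List.map_nil, List.prod_nil]; exact (cfc_const_one ℝ A).symm
  | cons a L ih =>
    simp only [List.map_cons, List.prod_cons, ih]
    have h1 : (1 - (a : ℂ) • A) = cfc (fun u : ℝ => 1 - a * u) A := by
      rw [cfc_sub _ _ A, cfc_const_mul _ _ A, cfc_id' ℝ A, cfc_const_one ℝ A, Complex.coe_smul]
    rw [h1, ← cfc_pow (fun u : ℝ => 1 - a * u) 2 (a := A), ← cfc_mul _ _ A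
      (by fun_prop) ((contProd L).continuousOn)]

private lemma finalArith (c d t : ℝ) (hc : 0 ≤ c) (hd : 0 ≤ d) (ht : 0 < t) :
    min d (c / t) ≤ 2 * (c + d) / (1 + t) := by
  rcases le_total 1 t with h | h
  · refine (min_le_right _ _).trans ?_
    rw [div_le_div_iff₀ ht (by linarith)]; nlinarith
  · refine (min_le_left _ _).trans ?_
    rw [le_div_iff₀ (by linarith)]; nlinarith

/-- bound `‖A^β ∏_{j=l}^T (I - η_j A)^2‖ ≤ 2((β/(2e))^β + ‖A‖^β)/(1 + (∑_{j=l}^T η_j)^β)`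
for a compact positive operator `A` on a Hilbert space, where `A^β` is defined via the
continuous functional calculus. -/
theorem stmt_1 {H : Type*} [NormedAddCommGroup H] [InnerProductSpace ℂ H] [CompleteSpace H]
    (A : H →L[ℂ] H) (hA : IsCompactOperator (⇑A)) (hpos : A.IsPositive)
    (β : ℝ) (hβ : 0 < β) (l T : ℕ) (hl : 1 ≤ l) (hlT : l ≤ T)
    (η : ℕ → ℝ) (hη : ∀ t, l ≤ t → t ≤ T → 0 < η t)
    (hηA : ∀ t, l ≤ t → t ≤ T → η t * ‖A‖ < 1) :
    ‖cfc (fun u : ℝ => u ^ β) A *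
        ((List.range (T + 1 - l)).map (fun k => (1 - ((η (l + k) : ℂ)) • A) ^ 2)).prod‖ ≤
      2 * ((β / (2 * Real.exp 1)) ^ β + ‖A‖ ^ β) / (1 + (∑ j ∈ Finset.Icc l T, η j) ^ β) := by
  have hS : 0 < ∑ j ∈ Finset.Icc l T, η j :=
    Finset.sum_pos (fun i hi => hη i (Finset.mem_Icc.mp hi).1 (Finset.mem_Icc.mp hi).2)
      ⟨l, Finset.mem_Icc.mpr ⟨le_refl l, hlT⟩⟩
  set S := ∑ j ∈ Finset.Icc l T, η j with hSdef
  have hRHS0 : 0 ≤ 2 * ((β / (2 * Real.exp 1)) ^ β + ‖A‖ ^ β) / (1 + S ^ β) := by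
    apply div_nonneg (by positivity)
    have := Real.rpow_nonneg hS.le β
    linarith
  rcases subsingleton_or_nontrivial H with hH | hH
  · have : Subsingleton (H →L[ℂ] H) := ⟨fun x y => ContinuousLinearMap.ext fun v =>
      Subsingleton.elim _ _⟩
    have h0 : ∀ x : H →L[ℂ] H, ‖x‖ = 0 := fun x => by rw [Subsingleton.elim x 0, norm_zero]
    rw [h0]
    exact hRHS0
  · set L : List ℝ := (List.range (T + 1 - l)).map (fun k => η (l + k)) with hLdef
    have hsa : IsSelfAdjoint A := hpos.isSelfAdjoint
    have hA0 : (0 : H →L[ℂ] H) ≤ A := (ContinuousLinearMap.nonneg_iff_isPositive A).mpr hpos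
    have hLsum : L.sum = S := by
      rw [hSdef, ← Finset.Ico_add_one_right_eq_Icc, Finset.sum_Ico_eq_sum_range]
      rfl
    have hLmem : ∀ a ∈ L, 0 < a ∧ a * ‖A‖ < 1 := by
      intro a ha
      simp only [hLdef, List.mem_map, List.mem_range] at ha
      obtain ⟨k, hk, rfl⟩ := ha
      have h1 : l ≤ l + k := Nat.le_add_right _ _
      have h2 : l + k ≤ T := by omega
      exact ⟨hη _ h1 h2, hηA _ h1 h2⟩
    have hmap : ((List.range (T + 1 - l)).map (fun k => (1 - ((η (l + k) : ℂ)) • A) ^ 2)).prod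
        = (L.map (fun a : ℝ => (1 - (a : ℂ) • A) ^ 2)).prod := by
      rw [hLdef, List.map_map]; rfl
    have hcont1 : Continuous fun u : ℝ => u ^ β :=
      continuous_iff_continuousAt.mpr fun x => Real.continuousAt_rpow_const x β (Or.inr hβ.le)
    rw [hmap, prodCfc A hsa L,
      ← cfc_mul _ _ A hcont1.continuousOn ((contProd L).continuousOn)]
    have hmin0 : 0 ≤ min (‖A‖ ^ β) ((β / (2 * Real.exp 1)) ^ β / S ^ β) :=
      le_min (Real.rpow_nonneg (norm_nonneg A) β)
        (div_nonneg (Real.rpow_nonneg (by positivity) β) (Real.rpow_nonneg hS.le β))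
    refine (norm_cfc_le hmin0 ?_).trans ?_
    · intro x hx
      have hx0 : 0 ≤ x := spectrum_nonneg_of_nonneg hA0 hx
      have hxM : x ≤ ‖A‖ := by
        have := spectrum.norm_le_norm_of_mem hx
        rwa [Real.norm_of_nonneg hx0] at this
      obtain ⟨hP0, hP1, hPe⟩ := prodBounds L hLmem x hx0 hxM
      rw [Real.norm_eq_abs, abs_of_nonneg (mul_nonneg (Real.rpow_nonneg hx0 β) hP0)]
      refine le_min ?_ ?_
      · calc x ^ β * (L.map fun a => (1 - a * x) ^ 2).prod
            ≤ ‖A‖ ^ β * 1 :=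
              mul_le_mul (Real.rpow_le_rpow hx0 hxM hβ.le) hP1 hP0
                (Real.rpow_nonneg (norm_nonneg A) β)
          _ = ‖A‖ ^ β := mul_one _
      · calc x ^ β * (L.map fun a => (1 - a * x) ^ 2).prod
            ≤ x ^ β * Real.exp (-(2 * S * x)) := by
              rw [← hLsum]
              exact mul_le_mul_of_nonneg_left hPe (Real.rpow_nonneg hx0 β)
          _ ≤ (β / (2 * Real.exp 1)) ^ β / S ^ β := key1 hβ hS hx0
    · exact finalArith _ _ _ (Real.rpow_nonneg (by positivity) β)
        (Real.rpow_nonneg (norm_nonneg A) β) (Real.rpow_pos_of_pos hS β)
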